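/- Let 𝓗 be the pseudogroup on ℝ generated by the action of ℤ by integer translations, and let 𝓖 be the restriction of 𝓗 to a bounded open interval U of length > 1. Then for any choice of finite symmetric generating sets of 𝓗 and 𝓖, every 𝓗-orbit has infinite diameter in its word metric while every 𝓖-orbit has finite diameter in its word metric; hence the orbits are not coarsely quasi-isometric, even though 𝓗 and 𝓖 are equivalent pseudogroups (the inclusion U ↪ ℝ generates an equivalence). -/

import Mathlib

open Topology Filter Set

/-- A pseudogroup of local transformations of a topological space. -/
structure IsPseudogroup {Z : Type*} [TopologicalSpace Z]
    (H : Set (OpenPartialHomeomorph Z Z)) : Prop where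
  id_mem : OpenPartialHomeomorph.refl Z ∈ H
  trans_mem : ∀ h ∈ H, ∀ g ∈ H, h.trans g ∈ H
  symm_mem : ∀ h ∈ H, h.symm ∈ H
  restr_mem : ∀ h ∈ H, ∀ s : Set Z, IsOpen s → h.restr s ∈ H

/-- The orbit of a point under a pseudogroup. -/
def pgOrbit {Z : Type*} [TopologicalSpace Z]
    (H : Set (OpenPartialHomeomorph Z Z)) (x : Z) : Set Z :=
  {y | ∃ h ∈ H, x ∈ h.source ∧ h x = y}

/- The word length `|h|_{E,x}` of `h` at `x ∈ dom h` with respect to a set of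
generators `E`: zero if `h` is the identity near `x`, and otherwise the least
`k` such that, on a neighborhood of `x`, `h` agrees with a composite of `k`
elements of `E`. -/
open Classical in
noncomputable def wordLen {Z : Type*} [TopologicalSpace Z]
    (E : Set (OpenPartialHomeomorph Z Z)) (h : OpenPartialHomeomorph Z Z) (x : Z) : ℕ∞ :=
  if ∀ᶠ y in 𝓝 x, h y = y then 0
  else sInf {n : ℕ∞ | ∃ l : List (OpenPartialHomeomorph Z Z), l ≠ [] ∧ (∀ g ∈ l, g ∈ E) ∧
      n = (l.length : ℕ∞) ∧
      x ∈ (l.foldl OpenPartialHomeomorph.trans (OpenPartialHomeomorph.refl Z)).source ∧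
      ∀ᶠ y in 𝓝 x, (l.foldl OpenPartialHomeomorph.trans (OpenPartialHomeomorph.refl Z)) y = h y}

/-- The metric `d_E` on orbits induced by a symmetric set of generators `E`. -/
noncomputable def dE {Z : Type*} [TopologicalSpace Z]
    (H E : Set (OpenPartialHomeomorph Z Z)) (x y : Z) : ℕ∞ :=
  sInf {n : ℕ∞ | ∃ h ∈ H, x ∈ h.source ∧ h x = y ∧ wordLen E h x = n}


/-- Apply a list of partial homeomorphisms from the left. -/
def applyL (l : List (OpenPartialHomeomorph ℝ ℝ)) (x : ℝ) : ℝ :=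
  l.foldl (fun y g => g y) x

@[simp] lemma applyL_nil (x : ℝ) : applyL [] x = x := rfl

@[simp] lemma applyL_cons (g : OpenPartialHomeomorph ℝ ℝ) (l : List (OpenPartialHomeomorph ℝ ℝ))
    (x : ℝ) : applyL (g :: l) x = applyL l (g x) := rfl

lemma applyL_append (l₁ l₂ : List (OpenPartialHomeomorph ℝ ℝ)) (x : ℝ) :
    applyL (l₁ ++ l₂) x = applyL l₂ (applyL l₁ x) := List.foldl_append

lemma foldl_trans_eval (l : List (OpenPartialHomeomorph ℝ ℝ)) (e : OpenPartialHomeomorph ℝ ℝ)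
    (x : ℝ) : (l.foldl OpenPartialHomeomorph.trans e) x = applyL l (e x) := by
  induction l generalizing e with
  | nil => rfl
  | cons g l ih =>
      simp only [List.foldl_cons, applyL_cons]
      rw [ih]
      rw [OpenPartialHomeomorph.trans_apply]

lemma foldl_trans_source (l : List (OpenPartialHomeomorph ℝ ℝ)) (e : OpenPartialHomeomorph ℝ ℝ) :
    (l.foldl OpenPartialHomeomorph.trans e).source =
      e.source ∩ e ⁻¹' (l.foldl OpenPartialHomeomorph.trans (OpenPartialHomeomorph.refl ℝ)).source := by
  induction l generalizing e with
  | nil => simp [OpenPartialHomeomorph.refl_source]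
  | cons g l ih =>
      simp only [List.foldl_cons]
      rw [ih (e.trans g), ih ((OpenPartialHomeomorph.refl ℝ).trans g),
        OpenPartialHomeomorph.refl_trans, OpenPartialHomeomorph.trans_source]
      ext z
      simp only [Set.mem_inter_iff, Set.mem_preimage, OpenPartialHomeomorph.trans_apply,
        OpenPartialHomeomorph.refl_source, Set.mem_univ, true_and, and_assoc]

lemma applyL_inv (l : List (OpenPartialHomeomorph ℝ ℝ)) (y : ℝ)
    (hy : y ∈ (l.foldl OpenPartialHomeomorph.trans (OpenPartialHomeomorph.refl ℝ)).source) :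
    applyL ((l.map OpenPartialHomeomorph.symm).reverse) (applyL l y) = y := by
  induction l generalizing y with
  | nil => simp
  | cons g l ih =>
      rw [List.foldl_cons, OpenPartialHomeomorph.refl_trans, foldl_trans_source] at hy
      obtain ⟨hg, hsrc⟩ := hy
      simp only [List.map_cons, List.reverse_cons, applyL_cons, applyL_append]
      rw [ih (g y) hsrc]
      simp only [applyL_cons, applyL_nil]
      exact g.left_inv hg

/-- The set of points reachable from `x` by applying at most `K` elements of `E`. -/
def reach (E : Set (OpenPartialHomeomorph ℝ ℝ)) (K : ℕ) (x : ℝ) : Set ℝ :=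
  {y | ∃ l : List (OpenPartialHomeomorph ℝ ℝ), (∀ g ∈ l, g ∈ E) ∧ l.length ≤ K ∧ applyL l x = y}

lemma reach_finite {E : Set (OpenPartialHomeomorph ℝ ℝ)} (hE : E.Finite) (K : ℕ) (x : ℝ) :
    (reach E K x).Finite := by
  induction K generalizing x with
  | zero =>
      apply Set.Finite.subset (Set.finite_singleton x)
      rintro y ⟨l, -, hlen, hval⟩
      rw [Nat.le_zero, List.length_eq_zero_iff] at hlen
      subst hlen
      simpa using hval.symm
  | succ K ih =>
      apply Set.Finite.subset (Set.Finite.union (Set.finite_singleton x)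
        (Set.Finite.biUnion hE (fun g _ => ih (g x))))
      rintro y ⟨l, hmem, hlen, hval⟩
      cases l with
      | nil => left; simpa using hval.symm
      | cons g t =>
          right
          refine Set.mem_biUnion (hmem g (by simp)) ?_
          have hlen' : t.length ≤ K := by
            simpa using hlen
          exact ⟨t, fun g' hg' => hmem g' (by simp [hg']), hlen', hval⟩

lemma dE_reach {H E : Set (OpenPartialHomeomorph ℝ ℝ)} {x y : ℝ} {K : ℕ}
    (hle : dE H E x y ≤ (K : ℕ∞)) :
    ∃ l : List (OpenPartialHomeomorph ℝ ℝ), (∀ g ∈ l, g ∈ E) ∧ l.length ≤ K ∧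
      x ∈ (l.foldl OpenPartialHomeomorph.trans (OpenPartialHomeomorph.refl ℝ)).source ∧
      applyL l x = y := by
  have h1 : dE H E x y < ((K + 1 : ℕ) : ℕ∞) :=
    lt_of_le_of_lt hle (by exact_mod_cast Nat.lt_succ_self K)
  unfold dE at h1
  obtain ⟨n, ⟨h0, h0H, hx0, hval, hw⟩, hn⟩ := sInf_lt_iff.mp h1
  unfold wordLen at hw
  split_ifs at hw with hev
  · refine ⟨[], by simp, by simp, by simp [OpenPartialHomeomorph.refl_source], ?_⟩
    have : h0 x = x := hev.self_of_nhds
    rw [applyL_nil, ← hval, this]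
  · rw [← hw] at hn
    obtain ⟨m, ⟨l, -, hlE, hmlen, hlsrc, hlev⟩, hm⟩ := sInf_lt_iff.mp hn
    rw [hmlen] at hm
    have hlen : l.length ≤ K := Nat.lt_succ_iff.mp (by exact_mod_cast hm)
    refine ⟨l, hlE, hlen, hlsrc, ?_⟩
    have h2 : (l.foldl OpenPartialHomeomorph.trans (OpenPartialHomeomorph.refl ℝ)) x = h0 x :=
      hlev.self_of_nhds
    rw [foldl_trans_eval] at h2
    simpa [← hval] using h2

/-- Translation by the integer `n` as a (partial) homeomorphism of `ℝ`. -/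
noncomputable def intTranslation (n : ℤ) : OpenPartialHomeomorph ℝ ℝ :=
  (Homeomorph.addRight (n : ℝ)).toOpenPartialHomeomorph

/-- Let `𝓗` be the pseudogroup on `ℝ` generated by the action of `ℤ` by
translations, and let `𝓖` be its restriction to a bounded open interval
`U = (a,b)` of length `> 1` (so `U` meets every `𝓗`-orbit, and the inclusion
`U ↪ ℝ` generates an equivalence `𝓖 → 𝓗`). Then, for any choice of finite
symmetric generating sets `E` of `𝓗` and `E'` of `𝓖`, every `𝓗`-orbit has
infinite diameter for `d_E` while every `𝓖`-orbit has finite diameter for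
`d_{E'}`; hence corresponding orbits are not coarsely quasi-isometric. -/
theorem integer_translations_restricted_orbits_not_coarsely_quasi_isometric
    (H : Set (OpenPartialHomeomorph ℝ ℝ)) (hH : IsPseudogroup H)
    (htrans : ∀ n : ℤ, intTranslation n ∈ H)
    (hloc : ∀ h ∈ H, ∀ x ∈ h.source, ∃ n : ℤ, ∀ᶠ y in 𝓝 x, h y = y + (n : ℝ))
    (a b : ℝ) (hab : 1 < b - a)
    (G : Set (OpenPartialHomeomorph ℝ ℝ))
    (hG : G = {h ∈ H | h.source ⊆ Set.Ioo a b ∧ h.target ⊆ Set.Ioo a b})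
    (E : Set (OpenPartialHomeomorph ℝ ℝ)) (hEH : E ⊆ H) (hEfin : E.Finite)
    (hEsymm : ∀ g ∈ E, g.symm ∈ E)
    (hEgen : ∀ h ∈ H, ∀ x ∈ h.source, wordLen E h x ≠ ⊤)
    (E' : Set (OpenPartialHomeomorph ℝ ℝ)) (hE'G : E' ⊆ G) (hE'fin : E'.Finite)
    (hE'symm : ∀ g ∈ E', g.symm ∈ E')
    (hE'gen : ∀ h ∈ G, ∀ x ∈ h.source, wordLen E' h x ≠ ⊤) :
    -- `U` meets every `𝓗`-orbit, so the inclusion generates an equivalence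
    (∀ x : ℝ, ∃ y ∈ Set.Ioo a b, y ∈ pgOrbit H x) ∧
    -- every `𝓗`-orbit has infinite `d_E`-diameter
    (∀ x : ℝ, ¬ ∃ D : ℕ, ∀ y ∈ pgOrbit H x, dE H E x y ≤ (D : ℕ∞)) ∧
    -- every `𝓖`-orbit has finite `d_{E'}`-diameter
    (∀ x ∈ Set.Ioo a b, ∃ D : ℕ, ∀ y ∈ pgOrbit G x, dE G E' x y ≤ (D : ℕ∞)) ∧
    -- hence the orbits are not coarsely quasi-isometric
    (∀ x : ℝ, ∀ x' ∈ Set.Ioo a b,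
      ¬ ∃ (A A' : Set ℝ) (f : ℝ → ℝ) (C L : ℝ), 0 < C ∧ 0 < L ∧
        A ⊆ pgOrbit H x ∧ A' ⊆ pgOrbit G x' ∧
        (∀ y ∈ pgOrbit H x, ∃ p ∈ A, ((dE H E y p).toNat : ℝ) < C) ∧
        (∀ y ∈ pgOrbit G x', ∃ p ∈ A', ((dE G E' y p).toNat : ℝ) < C) ∧
        Set.BijOn f A A' ∧
        (∀ p ∈ A, ∀ q ∈ A,
          ((dE G E' (f p) (f q)).toNat : ℝ) ≤ L * ((dE H E p q).toNat : ℝ) ∧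
          ((dE H E p q).toNat : ℝ) ≤ L * ((dE G E' (f p) (f q)).toNat : ℝ))) := by
  have horb : ∀ (x : ℝ) (n : ℤ), x + (n : ℝ) ∈ pgOrbit H x := by
    intro x n
    exact ⟨intTranslation n, htrans n,
      by simp [intTranslation, Homeomorph.toOpenPartialHomeomorph_source], rfl⟩
  have hinf : ∀ x : ℝ, (pgOrbit H x).Infinite := by
    intro x
    apply Set.infinite_of_injective_forall_mem (f := fun n : ℤ => x + (n : ℝ))
    · intro m n hmn
      simpa using hmn
    · intro n
      exact horb x n
  have hGorbfin : ∀ x' ∈ Set.Ioo a b, (pgOrbit G x').Finite := by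
    intro x' hx'
    apply Set.Finite.subset
      (Set.Finite.image (fun n : ℤ => x' + (n : ℝ)) (Set.finite_Icc ⌈a - x'⌉ ⌊b - x'⌋))
    rintro y ⟨h, hhG, hsrc, rfl⟩
    rw [hG] at hhG
    obtain ⟨hhH, hsub, htar⟩ := hhG
    obtain ⟨n, hn⟩ := hloc h hhH x' hsrc
    have hval : h x' = x' + (n : ℝ) := hn.self_of_nhds
    have hmem : h x' ∈ Set.Ioo a b := htar (h.map_source hsrc)
    rw [hval] at hmem
    obtain ⟨hlt1, hlt2⟩ := hmem
    exact ⟨n, Set.mem_Icc.mpr ⟨Int.ceil_le.mpr (by linarith), Int.le_floor.mpr (by linarith)⟩,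
      hval.symm⟩
  refine ⟨?_, ?_, ?_, ?_⟩
  · -- part 1
    intro x
    refine ⟨x + ((⌊a - x⌋ + 1 : ℤ) : ℝ), ⟨?_, ?_⟩, horb x _⟩
    · push_cast
      have := Int.lt_floor_add_one (a - x)
      linarith
    · push_cast
      have := Int.floor_le (a - x)
      linarith
  · -- part 2
    rintro x ⟨D, hD⟩
    have hsub : pgOrbit H x ⊆ reach E D x := by
      intro y hy
      obtain ⟨l, hlE, hlen, -, hval⟩ := dE_reach (hD y hy)
      exact ⟨l, hlE, hlen, hval⟩
    exact hinf x ((reach_finite hEfin D x).subset hsub)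
  · -- part 3
    intro x' hx'
    have hfin := hGorbfin x' hx'
    have hne : ∀ y ∈ pgOrbit G x', dE G E' x' y ≠ ⊤ := by
      rintro y ⟨h, hhG, hsrc, rfl⟩ htop
      have hle : dE G E' x' (h x') ≤ wordLen E' h x' := sInf_le ⟨h, hhG, hsrc, rfl, rfl⟩
      rw [htop] at hle
      exact hE'gen h hhG x' hsrc (top_le_iff.mp hle)
    refine ⟨hfin.toFinset.sup (fun y => (dE G E' x' y).toNat), ?_⟩
    intro y hy
    rw [← ENat.coe_toNat (hne y hy)]
    exact_mod_cast Finset.le_sup (f := fun y => (dE G E' x' y).toNat)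
      (hfin.mem_toFinset.mpr hy)
  · -- part 4
    rintro x x' hx' ⟨A, A', f, C, L, hC, hL, hA, hA', hnet, hnet', hbij, -⟩
    have hA'fin : A'.Finite := (hGorbfin x' hx').subset hA'
    have hAfin : A.Finite :=
      Set.Finite.of_finite_image (hbij.image_eq ▸ hA'fin) hbij.injOn
    set K := ⌈C⌉₊ with hK
    have hcov : pgOrbit H x ⊆ ⋃ p ∈ A, reach E K p := by
      intro y hy
      obtain ⟨p, hpA, hdist⟩ := hnet y hy
      have hne : dE H E y p ≠ ⊤ := by
        obtain ⟨h1, h1H, hx1, rfl⟩ := hy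
        obtain ⟨h2, h2H, hx2, rfl⟩ := hA hpA
        set h := h1.symm.trans h2 with hh
        have hhH : h ∈ H := hH.trans_mem _ (hH.symm_mem _ h1H) _ h2H
        have hsrc : h1 x ∈ h.source := by
          rw [hh, OpenPartialHomeomorph.trans_source]
          constructor
          · rw [OpenPartialHomeomorph.symm_source]
            exact h1.map_source hx1
          · simp only [Set.mem_preimage]
            rw [h1.left_inv hx1]
            exact hx2
        have hhval : h (h1 x) = h2 x := by
          rw [hh, OpenPartialHomeomorph.trans_apply, h1.left_inv hx1]
        intro htop
        have hle : dE H E (h1 x) (h2 x) ≤ wordLen E h (h1 x) :=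
          sInf_le ⟨h, hhH, hsrc, hhval, rfl⟩
        rw [htop] at hle
        exact hEgen h hhH _ hsrc (top_le_iff.mp hle)
      have hKle : dE H E y p ≤ (K : ℕ∞) := by
        rw [← ENat.coe_toNat hne]
        exact_mod_cast le_of_lt (Nat.lt_ceil.mpr hdist)
      obtain ⟨l, hlE, hlen, hsrc, hval⟩ := dE_reach hKle
      refine Set.mem_biUnion hpA
        ⟨(l.map OpenPartialHomeomorph.symm).reverse, ?_, by simpa using hlen, ?_⟩
      · intro g hg
        rw [List.mem_reverse, List.mem_map] at hg
        obtain ⟨g', hg', rfl⟩ := hg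
        exact hEsymm g' (hlE g' hg')
      · rw [← hval]
        exact applyL_inv l y hsrc
    exact hinf x ((hAfin.biUnion (fun p _ => reach_finite hEfin K p)).subset hcov)
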